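/- For every α ≥ 2, the integral over ℝ² of 2α²(|y|^{α−2}/(1 + |y|^α)²)·((1 − |y|^α)/(1 + |y|^α))·log((1 + |y|^α)²) equals −4πα. -/

import Mathlib

open MeasureTheory Real Finset

noncomputable def laplacian (f : EuclideanSpace ℝ (Fin 2) → ℝ) (x : EuclideanSpace ℝ (Fin 2)) : ℝ :=
  ∑ i : Fin 2, fderiv ℝ (fun y => fderiv ℝ f y (EuclideanSpace.single i 1)) x (EuclideanSpace.single i 1)

section aux

open Set Filter Topology

lemma aux_deriv (α : ℝ) (n : ℕ) (hn : 1 ≤ n) {y : ℝ} (hy : 0 < y) :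
    HasDerivAt (fun y : ℝ => -(Real.log (1 + y ^ α) + 1 / n) / (1 + y ^ α) ^ n)
      ((n : ℝ) * (α * y ^ (α - 1)) * Real.log (1 + y ^ α) / (1 + y ^ α) ^ (n + 1)) y := by
  obtain ⟨m, rfl⟩ : ∃ m, n = m + 1 := ⟨n - 1, (Nat.succ_pred_eq_of_pos hn).symm⟩
  have hu : HasDerivAt (fun y : ℝ => 1 + y ^ α) (α * y ^ (α - 1)) y :=
    (Real.hasDerivAt_rpow_const (Or.inl hy.ne')).const_add 1
  set t := 1 + y ^ α with ht
  have ht1 : (1 : ℝ) ≤ t := le_add_of_nonneg_right (Real.rpow_nonneg hy.le α)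
  have htpos : 0 < t := lt_of_lt_of_le one_pos ht1
  have hnum : HasDerivAt (fun s : ℝ => -(Real.log s + 1 / (m + 1 : ℕ))) (-(1 / t)) t := by
    rw [one_div t]; exact ((Real.hasDerivAt_log htpos.ne').add_const _).neg
  have hden : HasDerivAt (fun s : ℝ => s ^ (m + 1)) (((m + 1 : ℕ) : ℝ) * t ^ m) t := by
    simpa using hasDerivAt_pow (m + 1) t
  have h := (hnum.div hden (pow_ne_zero _ htpos.ne')).comp y hu
  refine h.congr_deriv ?_
  clear_value t
  field_simp
  ring

lemma aux_cont (α : ℝ) (hα : 0 < α) (n : ℕ) :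
    ContinuousAt (fun y : ℝ => -(Real.log (1 + y ^ α) + 1 / n) / (1 + y ^ α) ^ n) 0 := by
  have hu : ContinuousAt (fun y : ℝ => 1 + y ^ α) 0 :=
    (Real.continuousAt_rpow_const 0 α (Or.inr hα.le)).const_add 1
  have h0 : (1 : ℝ) + (0 : ℝ) ^ α = 1 := by rw [Real.zero_rpow hα.ne', add_zero]
  refine ContinuousAt.div ?_ (hu.pow n) ?_
  · exact (((Real.continuousAt_log (by rw [h0]; norm_num)).comp hu).add_const _).neg
  · simp [h0]

lemma aux_tendsto (α : ℝ) (hα : 0 < α) (n : ℕ) (hn : 1 ≤ n) :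
    Tendsto (fun y : ℝ => -(Real.log (1 + y ^ α) + 1 / n) / (1 + y ^ α) ^ n) atTop (𝓝 0) := by
  have hu : Tendsto (fun y : ℝ => 1 + y ^ α) atTop atTop :=
    tendsto_atTop_add_const_left _ 1 (tendsto_rpow_atTop hα)
  have h1 : Tendsto (fun s : ℝ => -(Real.log s + 1 / n) / s ^ n) atTop (𝓝 0) := by
    have hlog : Tendsto (fun s : ℝ => Real.log s / s ^ n) atTop (𝓝 0) := by
      have := (isLittleO_log_rpow_atTop (by exact_mod_cast Nat.cast_pos.mpr (lt_of_lt_of_le one_pos hn) : (0:ℝ) < n)).tendsto_div_nhds_zero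
      refine this.congr' ?_
      filter_upwards [eventually_ge_atTop (0:ℝ)] with s hs
      rw [Real.rpow_natCast]
    have hconst : Tendsto (fun s : ℝ => (1 / n : ℝ) / s ^ n) atTop (𝓝 0) := by
      apply Tendsto.div_atTop tendsto_const_nhds
      exact tendsto_pow_atTop (Nat.one_le_iff_ne_zero.mp hn) |>.comp tendsto_id
    have h2 := (hlog.add hconst).neg
    rw [show -((0:ℝ) + 0) = 0 by norm_num] at h2
    exact h2.congr fun s => by ring
  exact h1.comp hu

lemma aux_integral (α : ℝ) (hα : 0 < α) (n : ℕ) (hn : 1 ≤ n) :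
    IntegrableOn (fun y : ℝ => (n : ℝ) * (α * y ^ (α - 1)) * Real.log (1 + y ^ α) / (1 + y ^ α) ^ (n + 1)) (Ioi 0) ∧
    ∫ y in Ioi (0:ℝ), (n : ℝ) * (α * y ^ (α - 1)) * Real.log (1 + y ^ α) / (1 + y ^ α) ^ (n + 1) = 1 / n := by
  have hnonneg : ∀ y ∈ Ioi (0:ℝ), 0 ≤ (n : ℝ) * (α * y ^ (α - 1)) * Real.log (1 + y ^ α) / (1 + y ^ α) ^ (n + 1) := by
    intro y hy
    have h1 : (1:ℝ) ≤ 1 + y ^ α := le_add_of_nonneg_right (Real.rpow_nonneg (le_of_lt hy) α)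
    have hlog : 0 ≤ Real.log (1 + y ^ α) := Real.log_nonneg h1
    have := Real.rpow_nonneg (le_of_lt (show (0:ℝ) < y from hy)) (α - 1)
    positivity
  have hcont := (aux_cont α hα n).continuousWithinAt (s := Ici 0)
  have hderiv := fun y (hy : y ∈ Ioi (0:ℝ)) => aux_deriv α n hn hy
  have htend := aux_tendsto α hα n hn
  have hval : -(Real.log (1 + (0:ℝ) ^ α) + 1 / n) / (1 + (0:ℝ) ^ α) ^ n = -(1 / n) := by
    rw [Real.zero_rpow hα.ne', add_zero, Real.log_one, zero_add, one_pow, div_one]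
  constructor
  · exact integrableOn_Ioi_deriv_of_nonneg hcont hderiv hnonneg htend
  · rw [integral_Ioi_of_hasDerivAt_of_tendsto hcont hderiv
      (integrableOn_Ioi_deriv_of_nonneg hcont hderiv hnonneg htend) htend, hval]
    ring

lemma aux_1d (α : ℝ) (hα : 0 < α) :
    ∫ y in Ioi (0:ℝ), y ^ 1 •
      (2 * α ^ 2 * (y ^ (α - 2) / (1 + y ^ α) ^ 2) * ((1 - y ^ α) / (1 + y ^ α)) *
        Real.log ((1 + y ^ α) ^ 2)) = -(2 * α) := by
  have h2 := aux_integral α hα 2 (by norm_num)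
  have h1 := aux_integral α hα 1 le_rfl
  have hcongr : ∀ y ∈ Ioi (0:ℝ), y ^ 1 •
      (2 * α ^ 2 * (y ^ (α - 2) / (1 + y ^ α) ^ 2) * ((1 - y ^ α) / (1 + y ^ α)) *
        Real.log ((1 + y ^ α) ^ 2)) =
      (4 * α) * (((2:ℕ) : ℝ) * (α * y ^ (α - 1)) * Real.log (1 + y ^ α) / (1 + y ^ α) ^ (2 + 1)) -
      (4 * α) * (((1:ℕ) : ℝ) * (α * y ^ (α - 1)) * Real.log (1 + y ^ α) / (1 + y ^ α) ^ (1 + 1)) := by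
    intro y hy
    have hy0 : (0:ℝ) < y := hy
    have ht : (0:ℝ) < 1 + y ^ α := by positivity
    have hyy : y ^ (α - 2) * y = y ^ (α - 1) :=
      calc y ^ (α - 2) * y = y ^ (α - 2) * y ^ (1:ℝ) := by rw [Real.rpow_one]
        _ = y ^ (α - 2 + 1) := (Real.rpow_add hy0 _ _).symm
        _ = y ^ (α - 1) := by rw [show α - 2 + 1 = α - 1 by ring]
    simp only [smul_eq_mul, pow_one, Real.log_pow]
    rw [← hyy]
    push_cast
    field_simp
    ring
  rw [setIntegral_congr_fun measurableSet_Ioi hcongr,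
    integral_sub ((h2.1.const_mul _)) ((h1.1.const_mul _)),
    integral_const_mul, integral_const_mul, h2.2, h1.2]
  push_cast
  ring

end aux

theorem singular_kernel_log_integral (α : ℝ) (hα : 2 ≤ α) :
    ∫ y : EuclideanSpace ℝ (Fin 2),
      2 * α ^ 2 * (‖y‖ ^ (α - 2) / (1 + ‖y‖ ^ α) ^ 2) * ((1 - ‖y‖ ^ α) / (1 + ‖y‖ ^ α)) *
        Real.log ((1 + ‖y‖ ^ α) ^ 2) = -(4 * Real.pi * α) := by
  have hα0 : (0:ℝ) < α := lt_of_lt_of_le two_pos hα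
  set f : ℝ → ℝ := fun r =>
    2 * α ^ 2 * (r ^ (α - 2) / (1 + r ^ α) ^ 2) * ((1 - r ^ α) / (1 + r ^ α)) *
      Real.log ((1 + r ^ α) ^ 2) with hf
  have hstep : (∫ y : EuclideanSpace ℝ (Fin 2),
      2 * α ^ 2 * (‖y‖ ^ (α - 2) / (1 + ‖y‖ ^ α) ^ 2) * ((1 - ‖y‖ ^ α) / (1 + ‖y‖ ^ α)) *
        Real.log ((1 + ‖y‖ ^ α) ^ 2)) = ∫ y : EuclideanSpace ℝ (Fin 2), f ‖y‖ := rfl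
  rw [hstep, MeasureTheory.integral_fun_norm_addHaar (volume : Measure (EuclideanSpace ℝ (Fin 2))) f]
  have hball : (volume (Metric.ball (0 : EuclideanSpace ℝ (Fin 2)) 1)).toReal = π := by
    rw [EuclideanSpace.volume_ball]
    simp only [Fintype.card_fin]
    rw [show ((2:ℕ):ℝ) / 2 + 1 = 2 by norm_num, Real.Gamma_two]
    rw [ENNReal.ofReal_one, one_pow, one_mul, div_one, Real.sq_sqrt Real.pi_nonneg,
      ENNReal.toReal_ofReal Real.pi_nonneg]
  rw [finrank_euclideanSpace_fin, measureReal_def, hball]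
  have h1d := aux_1d α hα0
  simp only [hf] at h1d ⊢
  rw [show 2 - 1 = 1 from rfl, h1d]
  rw [nsmul_eq_mul, smul_eq_mul]
  push_cast
  ring
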